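/- For a smooth metric ds² = dr² + G(r,θ)² dθ² (Fermi coordinates) with Gauss curvature satisfying |K| ≤ κ², the coefficient satisfies cos(κ r) ≤ G(r,θ) ≤ cosh(κ r) for all r in the domain (with κ r < π/2 for the lower bound). -/

import Mathlib

/-- ODE comparison for the metric coefficient in Fermi coordinates: if `g` is `C²`
with `g 0 = 1`, `g' 0 = 0`, `|g''| ≤ κ² |g|` and `g > 0` on `[0, R]`, with
`κ R < π/2`, then `cos (κ r) ≤ g r ≤ cosh (κ r)` on `[0, R]`. -/
theorem fermi_coefficient_bounds (κ R : ℝ) (hκ : 0 ≤ κ) (hR : 0 ≤ R)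
    (hκR : κ * R < Real.pi / 2) (g g' g'' : ℝ → ℝ)
    (hg' : ∀ r ∈ Set.Icc 0 R, HasDerivAt g (g' r) r)
    (hg'' : ∀ r ∈ Set.Icc 0 R, HasDerivAt g' (g'' r) r)
    (h0 : g 0 = 1) (h0' : g' 0 = 0)
    (hcurv : ∀ r ∈ Set.Icc 0 R, |g'' r| ≤ κ ^ 2 * |g r|)
    (hpos : ∀ r ∈ Set.Icc 0 R, 0 < g r) :
    ∀ r ∈ Set.Icc 0 R, Real.cos (κ * r) ≤ g r ∧ g r ≤ Real.cosh (κ * r) := by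
  have h0mem : (0:ℝ) ∈ Set.Icc 0 R := ⟨le_refl 0, hR⟩
  -- curvature bound rewritten
  have hbound : ∀ r ∈ Set.Icc 0 R, -(κ^2 * g r) ≤ g'' r ∧ g'' r ≤ κ^2 * g r := by
    intro r hr
    have h := hcurv r hr
    rw [abs_of_pos (hpos r hr)] at h
    exact abs_le.mp h
  -- derivatives of cosh(κ r), sinh(κ r), cos(κ r), sin(κ r)
  have hlin : ∀ r : ℝ, HasDerivAt (fun x => κ * x) κ r := by
    intro r; simpa using (hasDerivAt_id r).const_mul κ
  have hcosh : ∀ r : ℝ, HasDerivAt (fun x => Real.cosh (κ * x)) (κ * Real.sinh (κ * r)) r := by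
    intro r
    simpa [mul_comm, Function.comp_def] using (Real.hasDerivAt_cosh (κ * r)).comp r (hlin r)
  have hsinh : ∀ r : ℝ, HasDerivAt (fun x => κ * Real.sinh (κ * x)) (κ * (κ * Real.cosh (κ * r))) r := by
    intro r
    have := ((Real.hasDerivAt_sinh (κ * r)).comp r (hlin r)).const_mul κ
    simpa [mul_comm, mul_assoc, mul_left_comm] using this
  have hcos : ∀ r : ℝ, HasDerivAt (fun x => Real.cos (κ * x)) (-(κ * Real.sin (κ * r))) r := by
    intro r
    have := (Real.hasDerivAt_cos (κ * r)).comp r (hlin r)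
    simpa [mul_comm, Function.comp_def] using this
  have hsin : ∀ r : ℝ, HasDerivAt (fun x => κ * Real.sin (κ * x)) (κ * (κ * Real.cos (κ * r))) r := by
    intro r
    have := ((Real.hasDerivAt_sin (κ * r)).comp r (hlin r)).const_mul κ
    simpa [mul_comm, mul_assoc, mul_left_comm] using this
  -- cos (κ r) > 0 on [0,R]
  have hcospos : ∀ r ∈ Set.Icc 0 R, 0 < Real.cos (κ * r) := by
    intro r hr
    apply Real.cos_pos_of_mem_Ioo
    constructor
    · have : (0:ℝ) ≤ κ * r := mul_nonneg hκ hr.1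
      linarith [Real.pi_pos]
    · calc κ * r ≤ κ * R := mul_le_mul_of_nonneg_left hr.2 hκ
        _ < Real.pi / 2 := hκR
  have hcoshpos : ∀ r : ℝ, 0 < Real.cosh (κ * r) := fun r => Real.cosh_pos (x := κ * r)
  ------------------------------------------------------------------
  -- UPPER BOUND: w r = g' r * cosh(κ r) - g r * (κ * sinh(κ r)) is ≤ 0
  set w : ℝ → ℝ := fun r => g' r * Real.cosh (κ * r) - g r * (κ * Real.sinh (κ * r)) with hw_def
  have hw : ∀ r ∈ Set.Icc 0 R,
      HasDerivAt w ((g'' r - κ^2 * g r) * Real.cosh (κ * r)) r := by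
    intro r hr
    have h1 := ((hg'' r hr).mul (hcosh r)).sub ((hg' r hr).mul (hsinh r))
    convert h1 using 1
    · rfl
    · rfl
    · rfl
    ring
  have hwcont : ContinuousOn w (Set.Icc 0 R) :=
    fun r hr => (hw r hr).continuousAt.continuousWithinAt
  have hwanti : AntitoneOn w (Set.Icc 0 R) := by
    apply antitoneOn_of_deriv_nonpos (convex_Icc 0 R) hwcont
    · intro r hr
      rw [interior_Icc] at hr
      exact (hw r (Set.Ioo_subset_Icc_self hr)).differentiableAt.differentiableWithinAt
    intro r hr
    rw [interior_Icc] at hr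
    have hr' : r ∈ Set.Icc 0 R := Set.Ioo_subset_Icc_self hr
    rw [(hw r hr').deriv]
    apply mul_nonpos_of_nonpos_of_nonneg
    · linarith [(hbound r hr').2]
    · exact (hcoshpos r).le
  have hw0 : w 0 = 0 := by simp [hw_def, h0', h0]
  have hwle : ∀ r ∈ Set.Icc 0 R, w r ≤ 0 := by
    intro r hr
    calc w r ≤ w 0 := hwanti h0mem hr hr.1
      _ = 0 := hw0
  -- ratio g / cosh is antitone
  set q : ℝ → ℝ := fun r => g r / Real.cosh (κ * r) with hq_def
  have hq : ∀ r ∈ Set.Icc 0 R,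
      HasDerivAt q (w r / (Real.cosh (κ * r))^2) r := by
    intro r hr
    have h1 := (hg' r hr).div (hcosh r) (ne_of_gt (hcoshpos r))
    convert h1 using 1
    rfl
    rfl
    rfl
  have hqcont : ContinuousOn q (Set.Icc 0 R) :=
    fun r hr => (hq r hr).continuousAt.continuousWithinAt
  have hqanti : AntitoneOn q (Set.Icc 0 R) := by
    apply antitoneOn_of_deriv_nonpos (convex_Icc 0 R) hqcont
    · intro r hr
      rw [interior_Icc] at hr
      exact (hq r (Set.Ioo_subset_Icc_self hr)).differentiableAt.differentiableWithinAt
    intro r hr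
    rw [interior_Icc] at hr
    have hr' : r ∈ Set.Icc 0 R := Set.Ioo_subset_Icc_self hr
    rw [(hq r hr').deriv]
    exact div_nonpos_of_nonpos_of_nonneg (hwle r hr') (sq_nonneg _)
  have hupper : ∀ r ∈ Set.Icc 0 R, g r ≤ Real.cosh (κ * r) := by
    intro r hr
    have : q r ≤ q 0 := hqanti h0mem hr hr.1
    have hq0 : q 0 = 1 := by simp [hq_def, h0]
    rw [hq0] at this
    exact (div_le_one (hcoshpos r)).mp this
  ------------------------------------------------------------------
  -- LOWER BOUND: v r = g' r * cos(κ r) + g r * (κ * sin(κ r)) is ≥ 0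
  set v : ℝ → ℝ := fun r => g' r * Real.cos (κ * r) + g r * (κ * Real.sin (κ * r)) with hv_def
  have hv : ∀ r ∈ Set.Icc 0 R,
      HasDerivAt v ((g'' r + κ^2 * g r) * Real.cos (κ * r)) r := by
    intro r hr
    have h1 := ((hg'' r hr).mul (hcos r)).add ((hg' r hr).mul (hsin r))
    convert h1 using 1
    · rfl
    · rfl
    · rfl
    ring
  have hvcont : ContinuousOn v (Set.Icc 0 R) :=
    fun r hr => (hv r hr).continuousAt.continuousWithinAt
  have hvmono : MonotoneOn v (Set.Icc 0 R) := by
    apply monotoneOn_of_deriv_nonneg (convex_Icc 0 R) hvcont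
    · intro r hr
      rw [interior_Icc] at hr
      exact (hv r (Set.Ioo_subset_Icc_self hr)).differentiableAt.differentiableWithinAt
    · intro r hr
      rw [interior_Icc] at hr
      have hr' : r ∈ Set.Icc 0 R := Set.Ioo_subset_Icc_self hr
      rw [(hv r hr').deriv]
      apply mul_nonneg
      · linarith [(hbound r hr').1]
      · exact (hcospos r hr').le
  have hv0 : v 0 = 0 := by simp [hv_def, h0', h0]
  have hvge : ∀ r ∈ Set.Icc 0 R, 0 ≤ v r := by
    intro r hr
    calc (0:ℝ) = v 0 := hv0.symm
      _ ≤ v r := hvmono h0mem hr hr.1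
  -- ratio g / cos is monotone
  set p : ℝ → ℝ := fun r => g r / Real.cos (κ * r) with hp_def
  have hp : ∀ r ∈ Set.Icc 0 R,
      HasDerivAt p (v r / (Real.cos (κ * r))^2) r := by
    intro r hr
    have h1 := (hg' r hr).div (hcos r) (ne_of_gt (hcospos r hr))
    convert h1 using 2
    · rfl
    · rfl
    · rfl
    simp only [hv_def]
    ring
  have hpcont : ContinuousOn p (Set.Icc 0 R) :=
    fun r hr => (hp r hr).continuousAt.continuousWithinAt
  have hpmono : MonotoneOn p (Set.Icc 0 R) := by
    apply monotoneOn_of_deriv_nonneg (convex_Icc 0 R) hpcont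
    · intro r hr
      rw [interior_Icc] at hr
      exact (hp r (Set.Ioo_subset_Icc_self hr)).differentiableAt.differentiableWithinAt
    · intro r hr
      rw [interior_Icc] at hr
      have hr' : r ∈ Set.Icc 0 R := Set.Ioo_subset_Icc_self hr
      rw [(hp r hr').deriv]
      exact div_nonneg (hvge r hr') (sq_nonneg _)
  have hlower : ∀ r ∈ Set.Icc 0 R, Real.cos (κ * r) ≤ g r := by
    intro r hr
    have hp0 : p 0 = 1 := by simp [hp_def, h0]
    have : (1:ℝ) ≤ p r := by
      rw [← hp0]; exact hpmono h0mem hr hr.1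
    exact (one_le_div (hcospos r hr)).mp this
  exact fun r hr => ⟨hlower r hr, hupper r hr⟩
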